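/- Suppose X has well-defined scattered Π₁-products: any two paths in X admitting a scattered homotopy cut-set are path-homotopic. Let A be a homotopy cut-set for paths α, β : [0,1] → X such that for all a, b ∈ A ∩ (0,1) with a < b we have α|_{[a,b]} path-homotopic to β|_{[a,b]}. Then α is path-homotopic to β. -/

import Mathlib

open unitInterval

variable {X : Type*} [TopologicalSpace X]

noncomputable def subpath (α : C(ℝ, X)) (a b : ℝ) : Path (α a) (α b) where
  toFun t := α (a + (t : ℝ) * (b - a))
  continuous_toFun := α.continuous.comp (by continuity)
  source' := by simp
  target' := by
    show α (a + ((1 : unitInterval) : ℝ) * (b - a)) = α b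
    rw [Set.Icc.coe_one, one_mul]
    congr 1
    ring

def HomotopyCutSet (α β : C(ℝ, X)) (A : Set ℝ) : Prop :=
  IsClosed A ∧ IsNowhereDense A ∧ A ⊆ Set.Icc 0 1 ∧ (0:ℝ) ∈ A ∧ (1:ℝ) ∈ A ∧
  Set.EqOn α β A ∧
  ∀ a ∈ A, ∀ b ∈ A, a < b → A ∩ Set.Ioo a b = ∅ →
    ∀ (h1 : α a = β a) (h2 : α b = β b),
      (subpath α a b).Homotopic ((subpath β a b).cast h1 h2)

def awSet (X : Type*) [TopologicalSpace X] : Set X :=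
  {x | ∃ γ : ℕ → Path x x, (∀ n, ¬(γ n).Homotopic (Path.refl x)) ∧
    ∀ U ∈ nhds x, ∀ᶠ n in Filter.atTop, Set.range (γ n) ⊆ U}

def ScatteredSet {Y : Type*} [TopologicalSpace Y] (S : Set Y) : Prop :=
  ∀ T ⊆ S, T.Nonempty → ∃ x ∈ T, ∃ U : Set Y, IsOpen U ∧ U ∩ T = {x}

open Set Filter Topology

lemma cantor_not_countable : ¬ Countable (ℕ → Bool) := by
  intro h
  obtain ⟨g, hg⟩ := Countable.exists_injective_nat (ℕ → Bool)
  classical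
  refine Function.cantor_injective (fun s => g (fun n => decide (n ∈ s))) ?_
  refine hg.comp fun s t hst => ?_
  ext n
  have := congrFun hst n
  exact decide_eq_decide.mp this

lemma scattered_of_countable_closed {K : Set ℝ} (hc : K.Countable) (hK : IsClosed K) :
    ScatteredSet K := by
  intro T hTK hTne
  by_contra h
  push_neg at h
  have hpre : Preperfect T := by
    rw [preperfect_iff_nhds]
    intro x hx U hU
    obtain ⟨V, hVU, hVo, hxV⟩ := mem_nhds_iff.mp hU
    by_contra hcon
    push_neg at hcon
    refine h x hx V hVo ?_
    refine Set.eq_singleton_iff_unique_mem.mpr ⟨⟨hxV, hx⟩, fun y hy => ?_⟩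
    exact hcon y ⟨hVU hy.1, hy.2⟩
  have hperf : Perfect (closure T) := hpre.perfect_closure
  have hTcl : closure T ⊆ K := hK.closure_subset_iff.mpr hTK
  obtain ⟨f, hrange, -, hinj⟩ := hperf.exists_nat_bool_injection hTne.closure
  have hcount : (closure T).Countable := hc.mono hTcl
  have : Countable (ℕ → Bool) := by
    have := hcount.to_subtype
    exact Function.Injective.countable (f := fun x => (⟨f x, hrange ⟨x, rfl⟩⟩ : closure T))
      (fun a b hab => hinj (Subtype.ext_iff.mp hab))
  exact cantor_not_countable this

lemma nowhereDense_of_countable_closed {K : Set ℝ} (hc : K.Countable) (hK : IsClosed K) :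
    IsNowhereDense K :=
  hK.isNowhereDense_iff.mpr (interior_eq_empty_iff_dense_compl.mpr (hc.dense_compl ℝ))

lemma left_aux {A : Set ℝ} (hcl : IsClosed A)
    (hS : (A ∩ Set.Ioo 0 1).Nonempty) :
    ∃ P : Set ℝ, P ⊆ A ∩ Set.Ioo 0 1 ∧ P.Countable ∧ IsCompact (insert (0:ℝ) P) ∧
      ∀ b, 0 < b → (∃ p ∈ P, p < b) ∨ A ∩ Set.Ioo 0 b = ∅ := by
  set S := A ∩ Set.Ioo (0:ℝ) 1 with hSdef
  have hSsub : S ⊆ Set.Ioo 0 1 := Set.inter_subset_right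
  have hbd : BddBelow S := ⟨0, fun x hx => (hSsub hx).1.le⟩
  have hm0 : 0 ≤ sInf S := le_csInf hS (fun x hx => (hSsub hx).1.le)
  rcases hm0.eq_or_lt with hm | hm
  · -- sInf S = 0 : pick a sequence tending to 0
    have key : ∀ n : ℕ, ∃ y ∈ S, y < 1 / (n + 1 : ℝ) := by
      intro n
      refine exists_lt_of_csInf_lt hS ?_
      rw [← hm]; positivity
    choose s hsS hslt using key
    have htend : Tendsto s atTop (𝓝 0) := by
      refine tendsto_of_tendsto_of_tendsto_of_le_of_le tendsto_const_nhds
        tendsto_one_div_add_atTop_nhds_zero_nat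
        (fun n => (hSsub (hsS n)).1.le) (fun n => (hslt n).le)
    refine ⟨Set.range s, Set.range_subset_iff.mpr hsS, Set.countable_range s,
      htend.isCompact_insert_range, fun b hb => Or.inl ?_⟩
    obtain ⟨n, hn⟩ := exists_nat_one_div_lt hb
    exact ⟨s n, Set.mem_range_self n, (hslt n).trans hn⟩
  · -- sInf S > 0 : it is a minimum
    have hmA : sInf S ∈ A := by
      have h1 : sInf S ∈ closure S := csInf_mem_closure hS hbd
      have h2 : closure S ⊆ closure A := closure_mono Set.inter_subset_left
      rw [hcl.closure_eq] at h2
      exact h2 h1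
    obtain ⟨x, hxS⟩ := hS
    have hm1 : sInf S < 1 := lt_of_le_of_lt (csInf_le hbd hxS) (hSsub hxS).2
    have hmS : sInf S ∈ S := ⟨hmA, hm, hm1⟩
    refine ⟨{sInf S}, by simpa using hmS, Set.countable_singleton _,
      (Set.finite_singleton _).insert 0 |>.isCompact, fun b hb => ?_⟩
    rcases lt_or_ge (sInf S) b with h | h
    · exact Or.inl ⟨sInf S, rfl, h⟩
    · refine Or.inr (Set.eq_empty_iff_forall_notMem.mpr fun x hx => ?_)
      have hxS' : x ∈ S := ⟨hx.1, hx.2.1, lt_of_lt_of_le hx.2.2 (h.trans hm1.le)⟩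
      exact absurd (csInf_le hbd hxS') (not_le.mpr (lt_of_lt_of_le hx.2.2 h))

lemma right_aux {A : Set ℝ} (hcl : IsClosed A)
    (hS : (A ∩ Set.Ioo 0 1).Nonempty) :
    ∃ Q : Set ℝ, Q ⊆ A ∩ Set.Ioo 0 1 ∧ Q.Countable ∧ IsCompact (insert (1:ℝ) Q) ∧
      ∀ a, a < 1 → (∃ q ∈ Q, a < q) ∨ A ∩ Set.Ioo a 1 = ∅ := by
  set S := A ∩ Set.Ioo (0:ℝ) 1 with hSdef
  have hSsub : S ⊆ Set.Ioo 0 1 := Set.inter_subset_right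
  have hbd : BddAbove S := ⟨1, fun x hx => (hSsub hx).2.le⟩
  have hm1 : sSup S ≤ 1 := csSup_le hS (fun x hx => (hSsub hx).2.le)
  rcases hm1.eq_or_lt with hm | hm
  · -- sSup S = 1 : sequence tending to 1
    have key : ∀ n : ℕ, ∃ y ∈ S, 1 - 1 / (n + 1 : ℝ) < y := by
      intro n
      refine exists_lt_of_lt_csSup hS ?_
      rw [hm]
      have : (0:ℝ) < 1 / (n + 1 : ℝ) := by positivity
      linarith
    choose s hsS hslt using key
    have htend : Tendsto s atTop (𝓝 1) := by
      have hlow : Tendsto (fun n : ℕ => 1 - 1 / (n + 1 : ℝ)) atTop (𝓝 1) := by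
        have : Tendsto (fun n : ℕ => 1 / ((n : ℝ) + 1)) atTop (𝓝 0) :=
          tendsto_one_div_add_atTop_nhds_zero_nat
        have h2 := (tendsto_const_nhds (x := (1:ℝ)) (f := atTop)).sub this
        simpa using h2
      exact tendsto_of_tendsto_of_tendsto_of_le_of_le hlow tendsto_const_nhds
        (fun n => (hslt n).le) (fun n => (hSsub (hsS n)).2.le)
    refine ⟨Set.range s, Set.range_subset_iff.mpr hsS, Set.countable_range s,
      htend.isCompact_insert_range, fun a ha => Or.inl ?_⟩
    obtain ⟨n, hn⟩ := exists_nat_one_div_lt (show (0:ℝ) < 1 - a by linarith)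
    exact ⟨s n, Set.mem_range_self n, by have := hslt n; linarith⟩
  · -- sSup S < 1 : it is a maximum
    have hmA : sSup S ∈ A := by
      have h1 : sSup S ∈ closure S := csSup_mem_closure hS hbd
      have h2 : closure S ⊆ closure A := closure_mono Set.inter_subset_left
      rw [hcl.closure_eq] at h2
      exact h2 h1
    obtain ⟨x, hxS⟩ := hS
    have hm0 : 0 < sSup S := lt_of_lt_of_le (hSsub hxS).1 (le_csSup hbd hxS)
    have hmS : sSup S ∈ S := ⟨hmA, hm0, hm⟩
    refine ⟨{sSup S}, by simpa using hmS, Set.countable_singleton _,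
      (Set.finite_singleton _).insert 1 |>.isCompact, fun a ha => ?_⟩
    rcases lt_or_ge a (sSup S) with h | h
    · exact Or.inl ⟨sSup S, rfl, h⟩
    · refine Or.inr (Set.eq_empty_iff_forall_notMem.mpr fun x hx => ?_)
      have hxS' : x ∈ S := ⟨hx.1, lt_of_le_of_lt (hm0.le.trans h) hx.2.1, hx.2.2⟩
      exact absurd (le_csSup hbd hxS') (not_le.mpr (lt_of_le_of_lt h hx.2.1))

/-- Suppose `X` has well-defined scattered `Π₁`-products. If `A` is a homotopy cut-set for paths
`α, β` such that `α|_{[a,b]} ≃ β|_{[a,b]}` for all `a < b` in `A ∩ (0,1)`, then `α ≃ β`. -/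
theorem stmt11 {X : Type*} [TopologicalSpace X]
    (hX : ∀ (α β : C(ℝ, X)) (A : Set ℝ), HomotopyCutSet α β A → ScatteredSet A →
      ∀ (h1 : α 0 = β 0) (h2 : α 1 = β 1),
        (subpath α 0 1).Homotopic ((subpath β 0 1).cast h1 h2))
    (α β : C(ℝ, X)) (A : Set ℝ) (hA : HomotopyCutSet α β A)
    (hmid : ∀ a ∈ A ∩ Set.Ioo (0:ℝ) 1, ∀ b ∈ A ∩ Set.Ioo (0:ℝ) 1, a < b →
      ∀ (h1 : α a = β a) (h2 : α b = β b),
        (subpath α a b).Homotopic ((subpath β a b).cast h1 h2)) :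
    ∀ (h1 : α 0 = β 0) (h2 : α 1 = β 1),
      (subpath α 0 1).Homotopic ((subpath β 0 1).cast h1 h2) := by
  intro h1 h2
  obtain ⟨hcl, hnwd, hsub, h0A, h1A, heq, hgap⟩ := hA
  by_cases hS : (A ∩ Set.Ioo (0:ℝ) 1).Nonempty
  · obtain ⟨P, hPsub, hPc, hPcomp, hGL⟩ := left_aux hcl hS
    obtain ⟨Q, hQsub, hQc, hQcomp, hGR⟩ := right_aux hcl hS
    set A' : Set ℝ := insert 0 (insert 1 (P ∪ Q)) with hA'def
    have hPQS : P ∪ Q ⊆ A ∩ Set.Ioo 0 1 := Set.union_subset hPsub hQsub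
    have hA'A : A' ⊆ A := by
      intro x hx
      rcases hx with rfl | rfl | hx
      · exact h0A
      · exact h1A
      · exact (hPQS hx).1
    have hA'cl : IsClosed A' := by
      have : A' = insert (0:ℝ) P ∪ insert (1:ℝ) Q := by
        ext x
        simp only [hA'def, Set.mem_insert_iff, Set.mem_union]
        tauto
      rw [this]
      exact hPcomp.isClosed.union hQcomp.isClosed
    have hA'c : A'.Countable := ((hPc.union hQc).insert 1).insert 0
    have hA'sub : A' ⊆ Set.Icc 0 1 := by
      intro x hx
      rcases hx with rfl | rfl | hx
      · exact ⟨le_refl 0, zero_le_one⟩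
      · exact ⟨zero_le_one, le_refl 1⟩
      · exact Set.Ioo_subset_Icc_self (hPQS hx).2
    have hgap' : ∀ a ∈ A', ∀ b ∈ A', a < b → A' ∩ Set.Ioo a b = ∅ →
        ∀ (h1' : α a = β a) (h2' : α b = β b),
          (subpath α a b).Homotopic ((subpath β a b).cast h1' h2') := by
      intro a ha b hb hab hempty h1' h2'
      have hbA : b ∈ A := hA'A hb
      have haA : a ∈ A := hA'A ha
      have hne : ∀ x ∈ A', x ∉ Set.Ioo a b := by
        intro x hx hx'
        exact absurd hempty (Set.nonempty_iff_ne_empty.mp ⟨x, hx, hx'⟩)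
      rcases ha with rfl | rfl | haPQ
      · -- a = 0
        rcases hGL b hab with ⟨p, hpP, hpb⟩ | hem
        · exact absurd ⟨(hPsub hpP).2.1, hpb⟩
            (hne p (Set.mem_insert_iff.mpr (Or.inr (Set.mem_insert_iff.mpr
              (Or.inr (Or.inl hpP))))))
        · exact hgap 0 h0A b hbA hab hem h1' h2'
      · -- a = 1 : impossible
        exact absurd (hA'sub hb).2 (not_le.mpr hab)
      · -- a ∈ P ∪ Q
        have haS : a ∈ A ∩ Set.Ioo 0 1 := hPQS haPQ
        rcases hb with rfl | rfl | hbPQ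
        · exact absurd haS.2.1 (not_lt.mpr hab.le)
        · rcases hGR a haS.2.2 with ⟨q, hqQ, haq⟩ | hem
          · exact absurd ⟨haq, (hQsub hqQ).2.2⟩
              (hne q (Set.mem_insert_iff.mpr (Or.inr (Set.mem_insert_iff.mpr
                (Or.inr (Or.inr hqQ))))))
          · exact hgap a haA 1 h1A hab hem h1' h2'
        · exact hmid a haS b (hPQS hbPQ) hab h1' h2'
    have hcut : HomotopyCutSet α β A' :=
      ⟨hA'cl, nowhereDense_of_countable_closed hA'c hA'cl, hA'sub,
        Set.mem_insert 0 _, Set.mem_insert_iff.mpr (Or.inr (Set.mem_insert 1 _)),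
        heq.mono hA'A, hgap'⟩
    exact hX α β A' hcut (scattered_of_countable_closed hA'c hA'cl) h1 h2
  · rw [Set.not_nonempty_iff_eq_empty] at hS
    exact hgap 0 h0A 1 h1A one_pos hS h1 h2
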